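/- Let Γ₀ ⊆ Γ be an inclusion of submonoids of a finitely generated free abelian group (affine semigroups). Suppose Γ is generated by a family (δⱼ)_{j∈J}, and there exist an integer d ≥ 1 and an element γ ∈ Γ₀ such that γ + d·δⱼ ∈ Γ₀ for every j ∈ J. If Γ₀ is finitely generated, then Γ is finitely generated. -/

import Mathlib

open Set

/-- A pwo set has a finite dominating ("basis") subset. -/
lemma exists_finite_basis {α : Type*} [PartialOrder α] {S : Set α} (h : S.IsPWO) :
    ∃ T ⊆ S, T.Finite ∧ ∀ s ∈ S, ∃ t ∈ T, t ≤ s := by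
  refine ⟨{m ∈ S | ∀ x ∈ S, ¬ x < m}, fun m hm => hm.1, ?_, ?_⟩
  · refine IsAntichain.finite_of_partiallyWellOrderedOn (r := (· ≤ ·)) ?_
      (h.mono (fun m hm => hm.1))
    intro a ha b hb hab hle
    exact hb.2 a ha.1 (lt_of_le_of_ne hle hab)
  · intro s hs
    have hA : {x ∈ S | x ≤ s}.IsWF := h.isWF.mono (fun x hx => hx.1)
    have hne : {x ∈ S | x ≤ s}.Nonempty := ⟨s, hs, le_rfl⟩
    refine ⟨hA.min hne, ⟨(hA.min_mem hne).1, ?_⟩, (hA.min_mem hne).2⟩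
    intro x hx hlt
    exact hA.not_lt_min hne ⟨hx, hlt.le.trans (hA.min_mem hne).2⟩ hlt

lemma mem_closure_finset_iff {n : ℕ} (B : Finset (Fin n → ℤ)) (x : Fin n → ℤ) :
    x ∈ AddSubmonoid.closure (B : Set (Fin n → ℤ)) ↔
      ∃ c : B → ℕ, ∑ b : B, c b • (b : Fin n → ℤ) = x := by
  rw [← Submodule.span_nat_eq_addSubmonoidClosure, Submodule.mem_toAddSubmonoid,
    Submodule.mem_span_finset]
  constructor
  · rintro ⟨f, -, hf⟩
    exact ⟨fun b => f b, by rw [Finset.sum_coe_sort B (fun i => f i • i), hf]⟩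
  · rintro ⟨c, hc⟩
    classical
    refine ⟨fun v => if hv : v ∈ B then c ⟨v, hv⟩ else 0,
      fun v hv => by_contra fun h => Function.mem_support.1 hv (dif_neg h), ?_⟩
    rw [← hc, ← Finset.sum_coe_sort B (fun i => (if hv : i ∈ B then c ⟨i, hv⟩ else 0) • i)]
    exact Finset.sum_congr rfl (by simp)

/-- Every subset of a f.g. submonoid of `ℤ^n` has a finite subset `T` such that every
element of `S` is in `t + M` for some `t ∈ T`. -/
lemma exists_finite_translates {n : ℕ} (M : AddSubmonoid (Fin n → ℤ)) (hM : M.FG)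
    (S : Set (Fin n → ℤ)) (hS : S ⊆ ↑M) :
    ∃ T ⊆ S, T.Finite ∧ ∀ s ∈ S, ∃ t ∈ T, s - t ∈ M := by
  obtain ⟨B, hB⟩ := hM
  set φ : (B → ℕ) → (Fin n → ℤ) := fun c => ∑ b : B, c b • (b : Fin n → ℤ) with hφ
  have hφM : ∀ c, φ c ∈ M := by
    intro c
    refine AddSubmonoid.sum_mem _ (fun b _ => AddSubmonoid.nsmul_mem _ ?_ _)
    rw [← hB]; exact AddSubmonoid.subset_closure b.2
  have hwo : IsWellOrder ℕ (· < ·) := inferInstance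
  have hpwo : (φ ⁻¹' S).IsPWO :=
    Set.isPWO_of_wellQuasiOrderedLE _
  obtain ⟨T', hT'sub, hT'fin, hT'⟩ := exists_finite_basis hpwo
  refine ⟨φ '' T', ?_, hT'fin.image φ, ?_⟩
  · rintro t ⟨c, hc, rfl⟩; exact hT'sub hc
  · intro s hs
    have hsM : s ∈ AddSubmonoid.closure (B : Set (Fin n → ℤ)) := by rw [hB]; exact hS hs
    obtain ⟨c, hc⟩ := (mem_closure_finset_iff B s).1 hsM
    have hφc : φ c = s := hc
    have hcS : c ∈ φ ⁻¹' S := by rw [Set.mem_preimage, hφc]; exact hs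
    obtain ⟨t', ht'T, ht'le⟩ := hT' c hcS
    refine ⟨φ t', Set.mem_image_of_mem φ ht'T, ?_⟩
    have : s - φ t' = φ (c - t') := by
      rw [← hc]
      simp only [hφ, ← Finset.sum_sub_distrib]
      refine Finset.sum_congr rfl (fun b _ => ?_)
      rw [Pi.sub_apply, sub_nsmul _ (ht'le b)]
      abel
    rw [this]; exact hφM _

theorem fg_of_translated_generators (n : ℕ) (Γ₀ Γ : AddSubmonoid (Fin n → ℤ))
    (hle : Γ₀ ≤ Γ) {J : Type*} (δ : J → (Fin n → ℤ))
    (hgen : Γ = AddSubmonoid.closure (Set.range δ))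
    (d : ℕ) (hd : 1 ≤ d) (γ : Fin n → ℤ) (hγ : γ ∈ Γ₀)
    (htrans : ∀ j : J, γ + d • δ j ∈ Γ₀)
    (hfg : Γ₀.FG) : Γ.FG := by
  classical
  subst hgen
  -- Step 1: a finite set of `δ`'s dominating all translates
  obtain ⟨T₁, hT₁sub, hT₁fin, hT₁⟩ := exists_finite_translates Γ₀ hfg
    (Set.range fun j => γ + d • δ j) (by rintro _ ⟨j, rfl⟩; exact htrans j)
  have : ∀ t ∈ T₁, ∃ j, γ + d • δ j = t := fun t ht => hT₁sub ht
  choose ε hε using this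
  have hT₁finsub : Finite T₁ := hT₁fin.to_subtype
  set D : Set (Fin n → ℤ) := Set.range (fun t : T₁ => δ (ε t t.2)) with hD
  have hDfin : D.Finite := Set.finite_range _
  -- Step 2: the f.g. monoid M with d • Γ ⊆ M ⊆ Γ
  obtain ⟨B₀, hB₀⟩ := hfg
  set M : AddSubmonoid (Fin n → ℤ) := AddSubmonoid.closure (↑B₀ ∪ D) with hM
  have hMfg : M.FG := (AddSubmonoid.fg_iff _).2 ⟨↑B₀ ∪ D, rfl, (B₀.finite_toSet).union hDfin⟩
  have hΓ₀M : Γ₀ ≤ M := by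
    rw [← hB₀, hM]
    exact AddSubmonoid.closure_mono (Set.subset_union_left)
  have hDM : D ⊆ ↑M := fun x hx => AddSubmonoid.subset_closure (Set.mem_union_right _ hx)
  have hMΓ : M ≤ AddSubmonoid.closure (Set.range δ) := by
    rw [hM]
    refine AddSubmonoid.closure_le.2 (Set.union_subset ?_ ?_)
    · intro x hx
      exact hle (hB₀ ▸ AddSubmonoid.subset_closure hx)
    · rintro _ ⟨t, rfl⟩
      exact AddSubmonoid.subset_closure ⟨_, rfl⟩
  have hdx : ∀ x ∈ AddSubmonoid.closure (Set.range δ), d • x ∈ M := by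
    intro x hx
    induction hx using AddSubmonoid.closure_induction with
    | mem x hx =>
      obtain ⟨j, rfl⟩ := hx
      obtain ⟨t, htT, htd⟩ := hT₁ _ ⟨j, rfl⟩
      have heq : γ + d • δ (ε t htT) = t := hε t htT
      have key : d • δ j = (γ + d • δ j - t) + d • δ (ε t htT) := by
        have h2 : (γ + d • δ j - t) + d • δ (ε t htT)
            = d • δ j + ((γ + d • δ (ε t htT)) - t) := by abel
        rw [h2, heq]; simp
      rw [key]
      exact AddSubmonoid.add_mem _ (hΓ₀M htd)
        (AddSubmonoid.nsmul_mem _ (hDM ⟨⟨t, htT⟩, rfl⟩) _)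
    | zero => simpa using AddSubmonoid.zero_mem M
    | add x y _ _ hx hy => rw [smul_add]; exact AddSubmonoid.add_mem _ hx hy
  -- Step 3: a finset generating M and the finite set of fractional parts
  obtain ⟨B, hB⟩ := id hMfg
  have hBM : ∀ b : B, (b : Fin n → ℤ) ∈ M := fun b => hB ▸ AddSubmonoid.subset_closure b.2
  have hd0 : 0 < d := hd
  set U : Set (Fin n → ℤ) :=
    Set.range (fun r : B → Fin d => fun i =>
      (∑ b : B, ((r b : ℕ)) • (b : Fin n → ℤ)) i / (d : ℤ)) with hU
  have hUfin : U.Finite := Set.finite_range _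
  -- cover: every x in Γ is u + m with u ∈ U, m ∈ M
  have hcover : ∀ x ∈ AddSubmonoid.closure (Set.range δ), ∃ u ∈ U, ∃ m ∈ M, x = u + m := by
    intro x hx
    obtain ⟨c, hc⟩ := (mem_closure_finset_iff B (d • x)).1 (by rw [hB]; exact hdx x hx)
    set m : Fin n → ℤ := ∑ b : B, (c b / d) • (b : Fin n → ℤ) with hm
    have hmM : m ∈ M := AddSubmonoid.sum_mem _ (fun b _ => AddSubmonoid.nsmul_mem _ (hBM b) _)
    set u : Fin n → ℤ := x - m with hu
    have hsplit : ∀ b : B, c b • (b : Fin n → ℤ)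
        = (d * (c b / d)) • (b : Fin n → ℤ) + (c b % d) • (b : Fin n → ℤ) := by
      intro b; rw [← add_nsmul, Nat.div_add_mod]
    have hdu : d • u = ∑ b : B, (c b % d) • (b : Fin n → ℤ) := by
      have h1 : d • x = ∑ b : B, (d * (c b / d)) • (b : Fin n → ℤ)
          + ∑ b : B, (c b % d) • (b : Fin n → ℤ) := by
        rw [← hc, ← Finset.sum_add_distrib]
        exact Finset.sum_congr rfl (fun b _ => hsplit b)
      have h2 : d • m = ∑ b : B, (d * (c b / d)) • (b : Fin n → ℤ) := by
        rw [hm, Finset.smul_sum]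
        exact Finset.sum_congr rfl (fun b _ => (mul_smul d (c b / d) _).symm)
      rw [hu, smul_sub, h1, h2]; abel
    have huU : u ∈ U := by
      refine ⟨fun b => ⟨c b % d, Nat.mod_lt _ hd0⟩, ?_⟩
      funext i
      have : (∑ b : B, (c b % d) • (b : Fin n → ℤ)) i = (d : ℤ) * u i := by
        rw [← hdu]; simp [nsmul_eq_mul]
      simp only [this]
      exact Int.mul_ediv_cancel_left _ (by exact_mod_cast hd0.ne')
    exact ⟨u, huU, m, hmM, by rw [hu]; abel⟩
  -- Step 4: finitely many translates inside each u + M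
  have hEx : ∀ u : Fin n → ℤ,
      ∃ T ⊆ {v | v ∈ M ∧ u + v ∈ AddSubmonoid.closure (Set.range δ)}, T.Finite ∧
        ∀ s ∈ {v | v ∈ M ∧ u + v ∈ AddSubmonoid.closure (Set.range δ)}, ∃ t ∈ T, s - t ∈ M :=
    fun u => exists_finite_translates M hMfg _ (fun v hv => hv.1)
  choose T hTsub hTfin hTdom using hEx
  set G : Set (Fin n → ℤ) := ↑B ∪ ⋃ u ∈ U, (fun v => u + v) '' (T u) with hG
  have hGfin : G.Finite := (B.finite_toSet).union (hUfin.biUnion (fun u _ => (hTfin u).image _))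
  refine (AddSubmonoid.fg_iff _).2 ⟨G, le_antisymm ?_ ?_, hGfin⟩
  · rw [AddSubmonoid.closure_le]
    rintro g (hg | hg)
    · exact hMΓ (hB ▸ AddSubmonoid.subset_closure hg)
    · simp only [Set.mem_iUnion, Set.mem_image] at hg
      obtain ⟨u, hu, v, hv, rfl⟩ := hg
      exact (hTsub u hv).2
  · intro x hx
    obtain ⟨u, huU, m, hmM, rfl⟩ := hcover x hx
    obtain ⟨v, hvT, hvM⟩ := hTdom u m ⟨hmM, hx⟩
    have hxeq : u + m = (u + v) + (m - v) := by abel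
    rw [hxeq]
    refine AddSubmonoid.add_mem _ ?_ ?_
    · refine AddSubmonoid.subset_closure (Or.inr ?_)
      simp only [Set.mem_iUnion, Set.mem_image]
      exact ⟨u, huU, v, hvT, rfl⟩
    · rw [← hB] at hvM
      exact AddSubmonoid.closure_mono Set.subset_union_left hvM
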